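/- Let 0 < m ≤ n be integers and let B be an m × n matrix with entries in 𝔽q[t] whose rank (over the fraction field 𝔽q(t)) equals m and such that m < n. Then there exist n − m vectors x₁, …, x_{n−m} ∈ (𝔽q[t])ⁿ that are linearly independent over 𝔽q[t], satisfy B·xᵢᵀ = 0 for each i, and satisfy deg_t(xᵢ) ≤ m · deg_t(B) for each i. -/

import Mathlib

open Matrix Polynomial

open Matrix Polynomial

lemma natDegree_det_le_aux {Fq : Type*} [CommRing Fq] {k : ℕ}
    (M : Matrix (Fin k) (Fin k) (Polynomial Fq)) {d : ℕ}
    (h : ∀ i j, (M i j).natDegree ≤ d) : M.det.natDegree ≤ k * d := by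
  rw [Matrix.det_apply']
  refine Polynomial.natDegree_sum_le_of_forall_le _ _ fun σ _ => ?_
  refine (Polynomial.natDegree_mul_le).trans ?_
  have h1 : ((Equiv.Perm.sign σ : ℤ) : Polynomial Fq).natDegree = 0 :=
    Polynomial.natDegree_intCast _
  have h2 : (∏ i, M (σ i) i).natDegree ≤ k * d := by
    refine (Polynomial.natDegree_prod_le _ _).trans ?_
    calc ∑ i, (M (σ i) i).natDegree ≤ ∑ _i : Fin k, d := Finset.sum_le_sum fun i _ => h _ _
      _ = k * d := by simp [Finset.sum_const, mul_comm]
  omega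


open Matrix Polynomial

-- from rank = m, get injective e : Fin m → Fin n with IsUnit of submatrix
lemma exists_invertible_submatrix {K : Type*} [Field K] {m n : ℕ}
    (B' : Matrix (Fin m) (Fin n) K) (hrank : B'.rank = m) :
    ∃ e : Fin m → Fin n, Function.Injective e ∧ (B'.submatrix id e).det ≠ 0 := by
  classical
  obtain ⟨b, hbsub, hbspan, hbli⟩ := exists_linearIndependent K (Set.range B'ᵀ)
  have hbfin : b.Finite := (Set.finite_range B'ᵀ).subset hbsub
  haveI := hbfin.fintype
  have hcard : b.toFinset.card = m := by
    have h1 := finrank_span_set_eq_card hbli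
    rw [hbspan, show Set.range B'ᵀ = Set.range B'.col from rfl, ← Matrix.rank_eq_finrank_span_cols, hrank] at h1
    omega
  have hcard' : Fintype.card b = m := by
    rw [Set.toFinset_card] at hcard; exact hcard
  let eqv : Fin m ≃ b := (Fintype.equivFinOfCardEq hcard').symm
  have hsel : ∀ v : b, ∃ j : Fin n, B'ᵀ j = v := fun v => hbsub v.2
  choose sel hsel' using hsel
  refine ⟨fun i => sel (eqv i), ?_, ?_⟩
  · intro i i' hii
    simp only at hii
    have : (eqv i : Fin m → K) = eqv i' := by
      rw [← hsel' (eqv i), ← hsel' (eqv i'), hii]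
    exact eqv.injective (Subtype.ext this)
  · have hcols : LinearIndependent K (fun i => (B'.submatrix id fun i => sel (eqv i))ᵀ i) := by
      have : (fun i => (B'.submatrix id fun i => sel (eqv i))ᵀ i)
          = (fun v : b => (v : Fin m → K)) ∘ eqv := by
        funext i
        simp [Matrix.transpose_apply, Function.comp]
        ext r
        have := congrFun (hsel' (eqv i)) r
        simpa [Matrix.transpose_apply] using this
      rw [this]
      exact hbli.comp eqv eqv.injective
    have hu := Matrix.linearIndependent_cols_iff_isUnit.mp hcols
    exact ((Matrix.isUnit_iff_isUnit_det _).mp hu).ne_zero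

theorem siegel_main
    (Fq : Type*) [Field Fq] [Fintype Fq]
    (m n : ℕ) (hm : 0 < m) (hmn : m < n)
    (B : Matrix (Fin m) (Fin n) (Polynomial Fq))
    (e : Fin m → Fin n) (he : Function.Injective e)
    (hdet : (B.submatrix id e).det ≠ 0)
    (hdeg : ∀ {k : ℕ} (M : Matrix (Fin k) (Fin k) (Polynomial Fq)) {d : ℕ},
      (∀ i j, (M i j).natDegree ≤ d) → M.det.natDegree ≤ k * d) :
    ∃ x : Fin (n - m) → (Fin n → Polynomial Fq),
      LinearIndependent (Polynomial Fq) x ∧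
      (∀ i, B.mulVec (x i) = 0) ∧
      (∀ i j, (x i j).natDegree ≤
        m * (Finset.univ.sup fun ij : Fin m × Fin n => (B ij.1 ij.2).natDegree)) := by
  classical
  set d := Finset.univ.sup fun ij : Fin m × Fin n => (B ij.1 ij.2).natDegree with hd
  have hBd : ∀ r k, (B r k).natDegree ≤ d := fun r k =>
    Finset.le_sup (f := fun ij : Fin m × Fin n => (B ij.1 ij.2).natDegree)
      (Finset.mem_univ (r, k))
  set M := B.submatrix id e with hM
  -- complement
  set T : Finset (Fin n) := Finset.univ.image e with hT
  have hTcard : T.card = m := by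
    rw [hT, Finset.card_image_of_injective _ he, Finset.card_univ, Fintype.card_fin]
  have hTc : Tᶜ.card = n - m := by
    rw [Finset.card_compl, hTcard, Fintype.card_fin]
  let c : Fin (n - m) → Fin n := fun f => (Tᶜ.orderIsoOfFin hTc f : Fin n)
  have hcinj : Function.Injective c := fun a b hab => by
    exact (Tᶜ.orderIsoOfFin hTc).injective (Subtype.ext hab)
  have hcmem : ∀ f, c f ∉ T := fun f => by
    exact Finset.mem_compl.mp (Tᶜ.orderIsoOfFin hTc f).2
  have hcne : ∀ f i, c f ≠ e i := by
    intro f i h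
    exact hcmem f (h ▸ Finset.mem_image_of_mem e (Finset.mem_univ i))
  -- the kernel vectors
  let cr : Fin (n - m) → Fin m → Polynomial Fq :=
    fun f => Matrix.cramer M (fun r => -B r (c f))
  let x : Fin (n - m) → Fin n → Polynomial Fq := fun f =>
    Pi.single (c f) M.det + ∑ i : Fin m, Pi.single (e i) (cr f i)
  -- entry values
  have hx_apply : ∀ f k, x f k
      = (Pi.single (c f) M.det : Fin n → Polynomial Fq) k
        + ∑ i : Fin m, (Pi.single (e i) (cr f i) : Fin n → Polynomial Fq) k := by
    intro f k
    simp [x, Finset.sum_apply]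
  have hx_self : ∀ f, x f (c f) = M.det := by
    intro f
    rw [hx_apply]
    rw [Pi.single_eq_same]
    have : ∀ i : Fin m, (Pi.single (e i) (cr f i) : Fin n → Polynomial Fq) (c f) = 0 := fun i =>
      Pi.single_eq_of_ne (hcne f i) _
    simp [this]
  have hx_other : ∀ f f', f ≠ f' → x f (c f') = 0 := by
    intro f f' hne
    rw [hx_apply]
    have h1 : (Pi.single (c f) M.det : Fin n → Polynomial Fq) (c f') = 0 :=
      Pi.single_eq_of_ne (fun h => hne (hcinj h.symm)) _
    have h2 : ∀ i : Fin m, (Pi.single (e i) (cr f i) : Fin n → Polynomial Fq) (c f') = 0 := fun i =>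
      Pi.single_eq_of_ne (hcne f' i) _
    simp [h1, h2]
  refine ⟨x, ?_, ?_, ?_⟩
  · -- linear independence
    rw [Fintype.linearIndependent_iff]
    intro g hg f0
    have := congrFun hg (c f0)
    simp only [Finset.sum_apply, Pi.smul_apply, smul_eq_mul, Pi.zero_apply] at this
    rw [Finset.sum_eq_single f0 (fun f _ hf => by rw [hx_other f f0 hf, mul_zero])
      (fun h => absurd (Finset.mem_univ f0) h)] at this
    rw [hx_self] at this
    rcases mul_eq_zero.mp this with h | h
    · exact h
    · exact absurd h hdet
  · -- kernel
    intro f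
    funext r
    have hc := congrFun (Matrix.mulVec_cramer M (fun r => -B r (c f))) r
    simp only [Matrix.mulVec, dotProduct, Pi.smul_apply, smul_eq_mul] at hc ⊢
    calc ∑ k, B r k * x f k
        = ∑ k, (B r k * (Pi.single (c f) M.det : Fin n → Polynomial Fq) k
            + ∑ i : Fin m, B r k * (Pi.single (e i) (cr f i) : Fin n → Polynomial Fq) k) := by
          refine Finset.sum_congr rfl fun k _ => ?_
          rw [hx_apply, mul_add, Finset.mul_sum]
      _ = B r (c f) * M.det + ∑ i : Fin m, B r (e i) * cr f i := by
          rw [Finset.sum_add_distrib]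
          congr 1
          · rw [Finset.sum_eq_single (c f)
              (fun k _ hk => by rw [Pi.single_eq_of_ne hk, mul_zero])
              (fun h => absurd (Finset.mem_univ _) h), Pi.single_eq_same]
          · rw [Finset.sum_comm]
            refine Finset.sum_congr rfl fun i _ => ?_
            rw [Finset.sum_eq_single (e i)
              (fun k _ hk => by rw [Pi.single_eq_of_ne hk, mul_zero])
              (fun h => absurd (Finset.mem_univ _) h), Pi.single_eq_same]
      _ = 0 := by
          have : ∑ i : Fin m, B r (e i) * cr f i = M.det * (-B r (c f)) := by
            rw [← hc]; rfl
          rw [this]; ring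
  · -- degrees
    intro f k
    rw [hx_apply]
    refine (Polynomial.natDegree_add_le _ _).trans (max_le ?_ ?_)
    · have h1 : M.det.natDegree ≤ m * d := hdeg M fun i j => hBd i (e j)
      rw [Pi.single_apply]
      split
      · exact h1
      · simp
    · refine Polynomial.natDegree_sum_le_of_forall_le _ _ fun i _ => ?_
      have h2 : (cr f i).natDegree ≤ m * d := by
        rw [show cr f i = (M.updateCol i fun r => -B r (c f)).det from
          Matrix.cramer_apply _ _ _]
        refine hdeg _ fun r j => ?_
        rw [Matrix.updateCol_apply]
        split
        · rw [Polynomial.natDegree_neg]; exact hBd r (c f)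
        · exact hBd r (e j)
      rw [Pi.single_apply]
      split
      · exact h2
      · simp


/-- **Siegel's lemma for function fields** (Corollary 2.4 of the paper).
Given an `m × n` matrix `B` over `𝔽q[t]` of full rank `m < n` (rank computed over
the fraction field `𝔽q(t)`), there are `n - m` vectors in `𝔽q[t]^n`, linearly
independent over `𝔽q[t]`, lying in the kernel of `B` and with degree at most
`m * deg_t B`. -/
theorem siegel_lemma_function_field
    (Fq : Type*) [Field Fq] [Fintype Fq]
    (m n : ℕ) (hm : 0 < m) (hmn : m < n)
    (B : Matrix (Fin m) (Fin n) (Polynomial Fq))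
    (hrank : (B.map fun b => algebraMap (Polynomial Fq) (RatFunc Fq) b).rank = m) :
    ∃ x : Fin (n - m) → (Fin n → Polynomial Fq),
      LinearIndependent (Polynomial Fq) x ∧
      (∀ i, B.mulVec (x i) = 0) ∧
      (∀ i j, (x i j).natDegree ≤
        m * (Finset.univ.sup fun ij : Fin m × Fin n => (B ij.1 ij.2).natDegree)) := by
  classical
  obtain ⟨e, he, hdet'⟩ := exists_invertible_submatrix _ hrank
  have hφ : Function.Injective (algebraMap (Polynomial Fq) (RatFunc Fq)) :=
    IsFractionRing.injective (Polynomial Fq) (RatFunc Fq)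
  have hdet : (B.submatrix id e).det ≠ 0 := by
    intro h
    apply hdet'
    have h1 : (B.map fun b => algebraMap (Polynomial Fq) (RatFunc Fq) b).submatrix id e
        = (algebraMap (Polynomial Fq) (RatFunc Fq)).mapMatrix (B.submatrix id e) := by
      rw [RingHom.mapMatrix_apply, Matrix.submatrix_map]
    rw [h1, ← RingHom.map_det, h, map_zero]
  exact siegel_main Fq m n hm hmn B e he hdet
    (fun {k} M {d} h => natDegree_det_le_aux M h)
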